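/- The counting encoding is correct for chains: interpreting the fact c_sg(c, I) as the goal sg(c, B₁) ∧ parent(B₂,B₁) ∧ ... ∧ parent(B_{I+1}, B_I) ∧ answer(B_{I+1}), the one-step transition using the recursive same-generation rule sg(A,B) ← parent(A,A') ∧ sg(A',B') ∧ parent(B,B') together with a fact parent(c, c') transforms the goal encoded by c_sg(c, I) into the goal encoded by c_sg(c', I+1); i.e., the rule c_sg(C', I+1) ← c_sg(C, I) ∧ parent(C, C') simulates two SLD steps (one rule-step, one fact-step) on the encoded goals. -/

import Mathlib

namespace Counting13

/-- Terms: constants and (normalized) variables. -/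
inductive Tm where
  | const : ℕ → Tm
  | var : ℕ → Tm
deriving DecidableEq

/-- Atoms over the predicates `sg`, `parent`, `person`, `answer`. -/
inductive Atm where
  | sg : Tm → Tm → Atm
  | parent : Tm → Tm → Atm
  | person : Tm → Atm
  | ans : Tm → Atm
deriving DecidableEq

abbrev Goal := List Atm

def tmVars : Tm → List ℕ
  | .const _ => []
  | .var i => [i]

def atmVars : Atm → List ℕ
  | .sg s t => tmVars s ++ tmVars t
  | .parent s t => tmVars s ++ tmVars t
  | .person t => tmVars t
  | .ans t => tmVars t

def goalVars : Goal → List ℕ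
  | [] => []
  | a :: g => atmVars a ++ goalVars g

def firstOccs (l : List ℕ) : List ℕ :=
  l.foldl (fun acc x => if x ∈ acc then acc else acc ++ [x]) []

def renTm (m : List ℕ) : Tm → Tm
  | .const c => .const c
  | .var i => .var (m.idxOf i + 1)

def renAtm (m : List ℕ) : Atm → Atm
  | .sg s t => .sg (renTm m s) (renTm m t)
  | .parent s t => .parent (renTm m s) (renTm m t)
  | .person t => .person (renTm m t)
  | .ans t => .ans (renTm m t)

/-- Normalization: rename variables to `V₁, V₂, ...` in order of first
occurrence; two goals are variants iff they have the same normalization. -/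
def normGoal (g : Goal) : Goal := g.map (renAtm (firstOccs (goalVars g)))

def substTm (x : ℕ) (u : Tm) : Tm → Tm
  | .const c => .const c
  | .var i => if i = x then u else .var i

def substAtm (x : ℕ) (u : Tm) : Atm → Atm
  | .sg s t => .sg (substTm x u s) (substTm x u t)
  | .parent s t => .parent (substTm x u s) (substTm x u t)
  | .person t => .person (substTm x u t)
  | .ans t => .ans (substTm x u t)

def substGoal (x : ℕ) (u : Tm) (g : Goal) : Goal := g.map (substAtm x u)

/-- One SLD step (first-literal selection) with the recursive rule
`sg(A,B) ← parent(A,A') ∧ sg(A',B') ∧ parent(B,B')`, with fresh distinct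
variables `a, b` for `A', B'`. -/
inductive recStep : Goal → Goal → Prop
  | mk (s t : Tm) (R : Goal) (a b : ℕ)
      (ha : a ∉ goalVars (.sg s t :: R)) (hb : b ∉ goalVars (.sg s t :: R))
      (hab : a ≠ b) :
      recStep (.sg s t :: R)
        (.parent s (.var a) :: .sg (.var a) (.var b) :: .parent t (.var b) :: R)

/-- One SLD step with the database fact `parent(c,c')`: the leading literal
`parent(c,X)` is removed and `X` is bound to `c'` in the rest of the goal. -/
inductive factStep (c c' : ℕ) : Goal → Goal → Prop
  | mk (x : ℕ) (R : Goal) :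
      factStep c c' (.parent (.const c) (.var x) :: R)
        (substGoal x (.const c') R)

/-- The goal encoded by the counting fact `c_sg(c, I)`:
`sg(c,B₁) ∧ parent(B₂,B₁) ∧ ... ∧ parent(B_{I+1},B_I) ∧ answer(B_{I+1})`. -/
def enc (c I : ℕ) : Goal :=
  Atm.sg (.const c) (.var 1) ::
    ((List.range I).map (fun i => Atm.parent (.var (i + 2)) (.var (i + 1))) ++
      [Atm.ans (.var (I + 1))])


/-! ### Auxiliary lemmas -/

def fo (acc l : List ℕ) : List ℕ :=
  l.foldl (fun acc x => if x ∈ acc then acc else acc ++ [x]) acc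

lemma firstOccs_eq_fo (l : List ℕ) : firstOccs l = fo [] l := rfl

lemma fo_append (acc l₁ l₂ : List ℕ) : fo acc (l₁ ++ l₂) = fo (fo acc l₁) l₂ :=
  List.foldl_append

lemma fo_cons (acc : List ℕ) (x : ℕ) (l : List ℕ) :
    fo acc (x :: l) = fo (if x ∈ acc then acc else acc ++ [x]) l := rfl

lemma fo_nil (acc : List ℕ) : fo acc [] = acc := rfl

lemma mem_fo (x : ℕ) (l : List ℕ) : ∀ acc, x ∈ fo acc l ↔ x ∈ acc ∨ x ∈ l := by
  induction l with
  | nil => intro acc; simp [fo_nil]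
  | cons y l ih =>
    intro acc
    rw [fo_cons, ih]
    by_cases h : y ∈ acc
    · simp only [if_pos h, List.mem_cons]
      constructor
      · rintro (hx | hx)
        · exact Or.inl hx
        · exact Or.inr (Or.inr hx)
      · rintro (hx | hx | hx)
        · exact Or.inl hx
        · exact Or.inl (hx ▸ h)
        · exact Or.inr hx
    · simp only [if_neg h, List.mem_append, List.mem_singleton, List.mem_cons]
      tauto

lemma goalVars_append (g₁ g₂ : Goal) :
    goalVars (g₁ ++ g₂) = goalVars g₁ ++ goalVars g₂ := by
  induction g₁ with
  | nil => simp [goalVars]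
  | cons a g ih => simp [goalVars, ih]

/-- The list of variables of the `parent` chain. -/
lemma fo_pairs (p : List ℕ) : ∀ J : ℕ, (∀ x ∈ p, J + 1 < x) →
    fo (p ++ [1]) (goalVars ((List.range J).map
      (fun i => Atm.parent (.var (i + 2)) (.var (i + 1))))) =
      p ++ List.range' 1 (J + 1) := by
  intro J
  induction J with
  | zero => intro _; simp [goalVars, fo_nil, List.range'_succ]
  | succ J ih =>
    intro hp
    rw [List.range_succ, List.map_append, goalVars_append, fo_append,
      ih (fun x hx => Nat.lt_of_succ_lt (hp x hx))]
    have h2 : (J + 2) ∉ p ++ List.range' 1 (J + 1) := by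
      simp only [List.mem_append, List.mem_range'_1]
      rintro (hmem | ⟨_, h⟩)
      · exact absurd (hp _ hmem) (by omega)
      · omega
    have h1 : (J + 1) ∈ (p ++ List.range' 1 (J + 1)) ++ [J + 2] := by
      simp [List.mem_range'_1]
    simp only [goalVars, atmVars, tmVars, List.map_cons, List.map_nil, List.singleton_append,
      List.nil_append, List.append_nil]
    rw [fo_cons, if_neg h2, fo_cons, if_pos h1, fo_nil]
    have : List.range' 1 (J + 1 + 1) = List.range' 1 (J + 1) ++ [1 + 1 * (J + 1)] :=
      List.range'_concat (s := 1) (n := J + 1)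
    rw [this, ← List.append_assoc]
    congr 2
    omega

lemma indexOf_range' (k : ℕ) : ∀ s n : ℕ, k < n →
    (List.range' s n).idxOf (s + k) = k := by
  induction k with
  | zero =>
    intro s n h
    obtain ⟨m, rfl⟩ : ∃ m, n = m + 1 := ⟨n - 1, by omega⟩
    rw [List.range'_succ]
    simp [List.idxOf_cons_self]
  | succ k ih =>
    intro s n h
    obtain ⟨m, rfl⟩ : ∃ m, n = m + 1 := ⟨n - 1, by omega⟩
    rw [List.range'_succ, List.idxOf_cons_ne _ (by omega : s ≠ s + (k + 1))]
    have : s + (k + 1) = (s + 1) + k := by omega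
    rw [this, ih (s + 1) m (by omega)]

lemma indexOf_range'_one (n i : ℕ) (h1 : 1 ≤ i) (h2 : i ≤ n) :
    (List.range' 1 n).idxOf i = i - 1 := by
  have := indexOf_range' (i - 1) 1 n (by omega)
  rwa [show 1 + (i - 1) = i by omega] at this

lemma renTm_range' (n i : ℕ) (h1 : 1 ≤ i) (h2 : i ≤ n) :
    renTm (List.range' 1 n) (.var i) = .var i := by
  simp [renTm, indexOf_range'_one n i h1 h2]
  omega

lemma renTm_cons_range' (n i b : ℕ) (h1 : 1 ≤ i) (h2 : i ≤ n) (hb : b ≠ i) :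
    renTm (b :: List.range' 1 n) (.var i) = .var (i + 1) := by
  simp [renTm, List.idxOf_cons_ne _ hb, indexOf_range'_one n i h1 h2]
  omega

lemma substTm_not_mem (x : ℕ) (u t : Tm) (h : x ∉ tmVars t) : substTm x u t = t := by
  cases t with
  | const c => rfl
  | var i =>
    simp [tmVars] at h
    simp [substTm, Ne.symm h]

lemma substAtm_not_mem (x : ℕ) (u : Tm) (a : Atm) (h : x ∉ atmVars a) :
    substAtm x u a = a := by
  cases a with
  | sg s t =>
    simp only [atmVars, List.mem_append, not_or] at h
    simp [substAtm, substTm_not_mem x u _ h.1, substTm_not_mem x u _ h.2]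
  | parent s t =>
    simp only [atmVars, List.mem_append, not_or] at h
    simp [substAtm, substTm_not_mem x u _ h.1, substTm_not_mem x u _ h.2]
  | person t => simp [substAtm, substTm_not_mem x u _ h]
  | ans t => simp [substAtm, substTm_not_mem x u _ h]

lemma substGoal_not_mem (x : ℕ) (u : Tm) (g : Goal) (h : x ∉ goalVars g) :
    substGoal x u g = g := by
  induction g with
  | nil => rfl
  | cons a g ih =>
    simp only [goalVars, List.mem_append, not_or] at h
    simp [substGoal, substAtm_not_mem x u a h.1] at ih ⊢
    exact ih h.2

lemma firstOccs_enc (c I : ℕ) :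
    firstOccs (goalVars (enc c I)) = List.range' 1 (I + 1) := by
  rw [firstOccs_eq_fo]
  show fo [] (goalVars (Atm.sg (.const c) (.var 1) ::
    ((List.range I).map (fun i => Atm.parent (.var (i + 2)) (.var (i + 1))) ++
      [Atm.ans (.var (I + 1))]))) = _
  rw [show (Atm.sg (Tm.const c) (Tm.var 1) ::
      ((List.range I).map (fun i => Atm.parent (.var (i + 2)) (.var (i + 1))) ++
        [Atm.ans (.var (I + 1))])) =
      ([Atm.sg (.const c) (.var 1)] ++
        (List.range I).map (fun i => Atm.parent (.var (i + 2)) (.var (i + 1)))) ++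
        [Atm.ans (.var (I + 1))] by simp]
  rw [goalVars_append, goalVars_append, fo_append, fo_append]
  have h1 : fo [] (goalVars [Atm.sg (.const c) (.var 1)]) = [] ++ [1] := by
    simp [goalVars, atmVars, tmVars, fo_cons, fo_nil]
  rw [h1, fo_pairs [] I (by simp), List.nil_append]
  have : (I + 1) ∈ List.range' 1 (I + 1) := by simp [List.mem_range'_1]
  simp [goalVars, atmVars, tmVars, fo_cons, fo_nil, this]

lemma goalVars_enc_le (c I : ℕ) : ∀ x ∈ goalVars (enc c I), x ≤ I + 1 := by
  intro x hx
  have : x ∈ fo [] (goalVars (enc c I)) := (mem_fo x _ []).2 (Or.inr hx)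
  rw [← firstOccs_eq_fo, firstOccs_enc] at this
  have := List.mem_range'_1.1 this
  omega


lemma firstOccs_g2 (c' I : ℕ) :
    firstOccs (goalVars (Atm.sg (.const c') (.var (I + 3)) ::
      Atm.parent (.var 1) (.var (I + 3)) ::
      ((List.range I).map (fun i => Atm.parent (.var (i + 2)) (.var (i + 1))) ++
        [Atm.ans (.var (I + 1))]))) = (I + 3) :: List.range' 1 (I + 1) := by
  rw [firstOccs_eq_fo]
  have hgv : goalVars (Atm.sg (.const c') (.var (I + 3)) ::
      Atm.parent (.var 1) (.var (I + 3)) ::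
      ((List.range I).map (fun i => Atm.parent (.var (i + 2)) (.var (i + 1))) ++
        [Atm.ans (.var (I + 1))])) =
      ([I + 3, 1, I + 3] ++ goalVars ((List.range I).map
        (fun i => Atm.parent (.var (i + 2)) (.var (i + 1))))) ++ [I + 1] := by
    simp [goalVars, atmVars, tmVars, goalVars_append]
  rw [hgv, fo_append, fo_append]
  have hfo1 : fo [] [I + 3, 1, I + 3] = [I + 3] ++ [1] := by
    rw [fo_cons, if_neg (by simp), fo_cons, if_neg (by simp),
      fo_cons, if_pos (by simp), fo_nil]
    simp
  rw [hfo1, fo_pairs [I + 3] I (by simp)]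
  rw [fo_cons, if_pos (by simp [List.mem_range'_1]), fo_nil]
  simp

/-- the counting rule `c_sg(C',I+1) ← c_sg(C,I) ∧ parent(C,C')`
simulates two SLD steps on the encoded goals: one step with the recursive
same-generation rule on `enc c I`, followed by one step with the fact
`parent(c,c')`, yields a variant (same normalization) of `enc c' (I+1)`. -/
theorem counting_encoding_correct (c c' I : ℕ) :
    ∃ g₁ g₂ : Goal, recStep (enc c I) g₁ ∧ factStep c c' g₁ g₂ ∧
      normGoal g₂ = normGoal (enc c' (I + 1)) := by
  classical
  have hRle : ∀ x ∈ goalVars ((List.range I).map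
      (fun i => Atm.parent (.var (i + 2)) (.var (i + 1))) ++
      [Atm.ans (.var (I + 1))]), x ≤ I + 1 := by
    intro x hx
    exact goalVars_enc_le c I x (by
      simp only [enc, goalVars, List.mem_append]
      exact Or.inr hx)
  have hEncle : ∀ x ∈ goalVars (enc c I), x ≤ I + 1 := goalVars_enc_le c I
  refine ⟨Atm.parent (.const c) (.var (I + 2)) ::
      Atm.sg (.var (I + 2)) (.var (I + 3)) ::
      Atm.parent (.var 1) (.var (I + 3)) ::
      ((List.range I).map (fun i => Atm.parent (.var (i + 2)) (.var (i + 1))) ++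
        [Atm.ans (.var (I + 1))]),
    _, ?_, factStep.mk (I + 2) _, ?_⟩
  · exact recStep.mk (.const c) (.var 1) _ (I + 2) (I + 3)
      (fun h => absurd (hEncle _ h) (by omega))
      (fun h => absurd (hEncle _ h) (by omega)) (by omega)
  · -- compute g₂
    have e1 : substTm (I + 2) (.const c') (.var (I + 2)) = .const c' := by
      simp [substTm]
    have e2 : substTm (I + 2) (.const c') (.var (I + 3)) = .var (I + 3) := by
      simp [substTm]
    have e3 : substTm (I + 2) (.const c') (.var 1) = .var 1 := by
      simp [substTm]
    have hsubR : List.map (substAtm (I + 2) (Tm.const c'))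
        ((List.range I).map (fun i => Atm.parent (.var (i + 2)) (.var (i + 1))) ++
          [Atm.ans (.var (I + 1))]) =
        ((List.range I).map (fun i => Atm.parent (.var (i + 2)) (.var (i + 1))) ++
          [Atm.ans (.var (I + 1))]) :=
      substGoal_not_mem (I + 2) (Tm.const c') _
        (fun h => absurd (hRle _ h) (by omega))
    have hg2 : substGoal (I + 2) (Tm.const c')
        (Atm.sg (.var (I + 2)) (.var (I + 3)) ::
          Atm.parent (.var 1) (.var (I + 3)) ::
          ((List.range I).map (fun i => Atm.parent (.var (i + 2)) (.var (i + 1))) ++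
            [Atm.ans (.var (I + 1))])) =
        Atm.sg (.const c') (.var (I + 3)) ::
          Atm.parent (.var 1) (.var (I + 3)) ::
          ((List.range I).map (fun i => Atm.parent (.var (i + 2)) (.var (i + 1))) ++
            [Atm.ans (.var (I + 1))]) := by
      simp only [substGoal, List.map_cons, substAtm, e1, e2, e3, hsubR]
    rw [hg2]
    -- normalizations
    simp only [normGoal]
    rw [firstOccs_g2, firstOccs_enc]
    -- left-hand side
    have lhs_sg : renAtm ((I + 3) :: List.range' 1 (I + 1))
        (Atm.sg (.const c') (.var (I + 3))) = Atm.sg (.const c') (.var 1) := by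
      simp [renAtm, renTm, List.idxOf_cons_self]
    have lhs_par : renAtm ((I + 3) :: List.range' 1 (I + 1))
        (Atm.parent (.var 1) (.var (I + 3))) = Atm.parent (.var 2) (.var 1) := by
      have h1 := renTm_cons_range' (I + 1) 1 (I + 3) (by omega) (by omega) (by omega)
      simp [renAtm, h1]
      simp [renTm, List.idxOf_cons_self]
    have lhs_ans : renAtm ((I + 3) :: List.range' 1 (I + 1))
        (Atm.ans (.var (I + 1))) = Atm.ans (.var (I + 2)) := by
      have h1 := renTm_cons_range' (I + 1) (I + 1) (I + 3) (by omega) (by omega) (by omega)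
      simp [renAtm, h1]
    have lhs_pairs : List.map (renAtm ((I + 3) :: List.range' 1 (I + 1)))
        ((List.range I).map (fun i => Atm.parent (.var (i + 2)) (.var (i + 1)))) =
        (List.range I).map (fun i => Atm.parent (.var (i + 3)) (.var (i + 2))) := by
      rw [List.map_map]
      apply List.map_congr_left
      intro i hi
      rw [List.mem_range] at hi
      have h1 := renTm_cons_range' (I + 1) (i + 2) (I + 3) (by omega) (by omega) (by omega)
      have h2 := renTm_cons_range' (I + 1) (i + 1) (I + 3) (by omega) (by omega) (by omega)
      simp only [Function.comp_apply, renAtm, h1, h2]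
    -- right-hand side
    have rhs_sg : renAtm (List.range' 1 (I + 2))
        (Atm.sg (.const c') (.var 1)) = Atm.sg (.const c') (.var 1) := by
      have h1 := renTm_range' (I + 2) 1 (by omega) (by omega)
      have hc : renTm (List.range' 1 (I + 2)) (Tm.const c') = Tm.const c' := rfl
      simp [renAtm, h1, hc]
    have rhs_ans : renAtm (List.range' 1 (I + 2))
        (Atm.ans (.var (I + 2))) = Atm.ans (.var (I + 2)) := by
      have h1 := renTm_range' (I + 2) (I + 2) (by omega) (by omega)
      simp [renAtm, h1]
    have rhs_pairs : List.map (renAtm (List.range' 1 (I + 2)))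
        ((List.range (I + 1)).map (fun i => Atm.parent (.var (i + 2)) (.var (i + 1)))) =
        (List.range (I + 1)).map (fun i => Atm.parent (.var (i + 2)) (.var (i + 1))) := by
      rw [List.map_map]
      apply List.map_congr_left
      intro i hi
      rw [List.mem_range] at hi
      have h1 := renTm_range' (I + 2) (i + 2) (by omega) (by omega)
      have h2 := renTm_range' (I + 2) (i + 1) (by omega) (by omega)
      simp only [Function.comp_apply, renAtm, h1, h2]
    have hsplit : (List.range (I + 1)).map
        (fun i => Atm.parent (.var (i + 2)) (.var (i + 1))) =
        Atm.parent (.var 2) (.var 1) ::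
          (List.range I).map (fun i => Atm.parent (.var (i + 3)) (.var (i + 2))) := by
      rw [List.range_succ_eq_map, List.map_cons, List.map_map]
      rfl
    simp only [enc, List.map_cons, List.map_append, List.map_cons, List.map_nil,
      lhs_sg, lhs_par, lhs_ans, lhs_pairs, rhs_sg, rhs_ans, rhs_pairs]
    rw [hsplit]
    simp


end Counting13
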